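/- Let Y be a random complex variable of the form Y = uᵀ X_r + i·uᵀ X_i for a fixed u ∈ ℝ^{2N} and random real vectors X_r, X_i ∈ ℝ^{2N}. Then E[|Y|⁴] = vᵀ C v and E[|Y|²] = vᵀ b, where v = qvec(u), b = E[svec(X̄)], C = E[svec(X̄) svec(X̄)ᵀ], and X̄ = X_r X_rᵀ + X_i X_iᵀ. Consequently the CMA cost E[(|Y|² − R₂)²] equals vᵀ C v − 2R₂ bᵀ v + R₂². -/

import Mathlib

open Matrix

abbrev Qidx (n : ℕ) := {p : Fin n × Fin n // p.1 ≤ p.2}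

def qvec {n : ℕ} (u : Fin n → ℝ) : Qidx n → ℝ := fun p => u p.1.1 * u p.1.2

def svec {n : ℕ} (M : Matrix (Fin n) (Fin n) ℝ) : Qidx n → ℝ :=
  fun p => if p.1.1 = p.1.2 then M p.1.1 p.1.2 else 2 * M p.1.1 p.1.2

lemma sum_qidx {n : ℕ} (f : Fin n × Fin n → ℝ) (hf : ∀ i j, f (i,j) = f (j,i)) :
    ∑ p : Qidx n, (if p.1.1 = p.1.2 then f p.1 else 2 * f p.1) = ∑ p : Fin n × Fin n, f p := by
  have h1 : ∑ p : Qidx n, (if p.1.1 = p.1.2 then f p.1 else 2 * f p.1)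
      = ∑ p ∈ Finset.univ.filter (fun p : Fin n × Fin n => p.1 ≤ p.2),
          (if p.1 = p.2 then f p else 2 * f p) := by
    rw [Finset.sum_subtype (Finset.univ.filter (fun p : Fin n × Fin n => p.1 ≤ p.2))]
    intro x; simp
  rw [h1]
  rw [← Finset.sum_filter_add_sum_filter_not Finset.univ (fun p : Fin n × Fin n => p.1 ≤ p.2) f]
  have h3 : ∑ p ∈ Finset.univ.filter (fun p : Fin n × Fin n => ¬ p.1 ≤ p.2), f p
      = ∑ p ∈ Finset.univ.filter (fun p : Fin n × Fin n => p.1 < p.2), f p := by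
    apply Finset.sum_nbij' (fun p => (p.2, p.1)) (fun p => (p.2, p.1))
    · intro a ha
      simp only [Finset.mem_filter, Finset.mem_univ, true_and, not_le] at ha ⊢
      exact ha
    · intro a ha
      simp only [Finset.mem_filter, Finset.mem_univ, true_and, not_le] at ha ⊢
      exact ha
    · intro a _; rfl
    · intro a _; rfl
    · intro a _; rw [show a = (a.1, a.2) from rfl]; exact (hf a.2 a.1).symm
  rw [h3]
  have h4 : (Finset.univ.filter (fun p : Fin n × Fin n => p.1 ≤ p.2)) =
      (Finset.univ.filter (fun p : Fin n × Fin n => p.1 < p.2)) ∪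
      (Finset.univ.filter (fun p : Fin n × Fin n => p.1 = p.2)) := by
    ext p; simp [le_iff_lt_or_eq]
  have hd2 : Disjoint (Finset.univ.filter (fun p : Fin n × Fin n => p.1 < p.2))
      (Finset.univ.filter (fun p : Fin n × Fin n => p.1 = p.2)) := by
    rw [Finset.disjoint_filter]
    intro p _ h; exact ne_of_lt h
  rw [h4, Finset.sum_union hd2, Finset.sum_union hd2]
  rw [Finset.sum_ite_of_false, Finset.sum_ite_of_true]
  · simp only [two_mul, Finset.sum_add_distrib]; ring
  · intro p hp; simpa using hp
  · intro p hp; simp at hp; exact ne_of_lt hp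

lemma qvec_dot_svec {n : ℕ} (u : Fin n → ℝ) (M : Matrix (Fin n) (Fin n) ℝ)
    (hM : ∀ i j, M i j = M j i) :
    qvec u ⬝ᵥ svec M = u ⬝ᵥ M.mulVec u := by
  have key := sum_qidx (fun p : Fin n × Fin n => u p.1 * u p.2 * M p.1 p.2)
    (by intro i j; simp only; rw [hM]; ring)
  calc qvec u ⬝ᵥ svec M
      = ∑ p : Qidx n, (if p.1.1 = p.1.2 then u p.1.1 * u p.1.2 * M p.1.1 p.1.2
          else 2 * (u p.1.1 * u p.1.2 * M p.1.1 p.1.2)) := by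
        simp only [dotProduct, qvec, svec]
        apply Finset.sum_congr rfl; intro p _; split <;> ring
    _ = ∑ p : Fin n × Fin n, u p.1 * u p.2 * M p.1 p.2 := key
    _ = u ⬝ᵥ M.mulVec u := by
        simp only [dotProduct, mulVec, dotProduct, Fintype.sum_prod_type, Finset.mul_sum]
        apply Finset.sum_congr rfl; intro i _
        apply Finset.sum_congr rfl; intro j _; ring

lemma key_sq {n : ℕ} (u x : Fin n → ℝ) :
    qvec u ⬝ᵥ svec (vecMulVec x x) = (u ⬝ᵥ x) ^ 2 := by
  rw [qvec_dot_svec u _ (by intro i j; simp [vecMulVec_apply]; ring)]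
  simp only [dotProduct, mulVec, vecMulVec_apply, sq, Finset.sum_mul, Finset.mul_sum,
    dotProduct]
  apply Finset.sum_congr rfl; intro i _
  apply Finset.sum_congr rfl; intro j _; ring

lemma svec_add {n : ℕ} (A B : Matrix (Fin n) (Fin n) ℝ) :
    svec (A + B) = svec A + svec B := by
  funext p; simp only [svec, Matrix.add_apply, Pi.add_apply]; split <;> ring


lemma dot_sum {ι n : Type*} [Fintype ι] [Fintype n] (v : n → ℝ) (f : ι → (n → ℝ)) :
    v ⬝ᵥ ∑ k, f k = ∑ k, v ⬝ᵥ f k := by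
  simp only [dotProduct, Finset.sum_apply, Finset.mul_sum]
  exact Finset.sum_comm

lemma sum_mulVec' {ι n : Type*} [Fintype ι] [Fintype n]
    (M : ι → Matrix n n ℝ) (v : n → ℝ) :
    (∑ k, M k) *ᵥ v = ∑ k, (M k *ᵥ v) := by
  funext i
  simp only [mulVec, dotProduct, Finset.sum_apply, Matrix.sum_apply, Finset.sum_mul]
  exact Finset.sum_comm

lemma dot_vecMulVec {n : Type*} [Fintype n] (v s : n → ℝ) :
    v ⬝ᵥ (vecMulVec s s *ᵥ v) = (v ⬝ᵥ s) ^ 2 := by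
  simp only [dotProduct, mulVec, vecMulVec_apply, dotProduct, sq, Finset.sum_mul,
    Finset.mul_sum]
  apply Finset.sum_congr rfl; intro i _
  apply Finset.sum_congr rfl; intro j _; ring

theorem stmt13 (N K : ℕ) (hK : 0 < K) (u : Fin (2 * N) → ℝ)
    (Xr Xi : Fin K → (Fin (2 * N) → ℝ)) (R₂ : ℝ)
    (Y : Fin K → ℂ)
    (hY : ∀ k, Y k = (u ⬝ᵥ Xr k : ℝ) + (u ⬝ᵥ Xi k : ℝ) * Complex.I)
    (Xbar : Fin K → Matrix (Fin (2 * N)) (Fin (2 * N)) ℝ)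
    (hXbar : ∀ k, Xbar k = vecMulVec (Xr k) (Xr k) + vecMulVec (Xi k) (Xi k))
    (v : Qidx (2 * N) → ℝ) (hv : v = qvec u)
    (b : Qidx (2 * N) → ℝ) (hb : b = (K : ℝ)⁻¹ • ∑ k, svec (Xbar k))
    (C : Matrix (Qidx (2 * N)) (Qidx (2 * N)) ℝ)
    (hC : C = (K : ℝ)⁻¹ • ∑ k, vecMulVec (svec (Xbar k)) (svec (Xbar k))) :
    ((K : ℝ)⁻¹ * ∑ k, ‖Y k‖ ^ 4 = v ⬝ᵥ C.mulVec v) ∧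
    ((K : ℝ)⁻¹ * ∑ k, ‖Y k‖ ^ 2 = v ⬝ᵥ b) ∧
    ((K : ℝ)⁻¹ * ∑ k, (‖Y k‖ ^ 2 - R₂) ^ 2 =
      v ⬝ᵥ C.mulVec v - 2 * R₂ * (b ⬝ᵥ v) + R₂ ^ 2) := by
  -- |Y k|² = v ⬝ᵥ svec (Xbar k)
  have habs : ∀ k, ‖Y k‖ ^ 2 = v ⬝ᵥ svec (Xbar k) := by
    intro k
    rw [hY k, Complex.sq_norm, Complex.normSq_add_mul_I, hXbar k, hv, svec_add,
      dotProduct_add, key_sq, key_sq]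
  have h2 : (K : ℝ)⁻¹ * ∑ k, ‖Y k‖ ^ 2 = v ⬝ᵥ b := by
    rw [hb, dotProduct_smul, smul_eq_mul]
    congr 1
    rw [dot_sum]
    exact Finset.sum_congr rfl fun k _ => habs k
  have h1 : (K : ℝ)⁻¹ * ∑ k, ‖Y k‖ ^ 4 = v ⬝ᵥ C.mulVec v := by
    rw [hC, smul_mulVec, dotProduct_smul, smul_eq_mul]
    congr 1
    rw [sum_mulVec', dot_sum]
    apply Finset.sum_congr rfl
    intro k _
    rw [show (4 : ℕ) = 2 * 2 from rfl, pow_mul, habs k, dot_vecMulVec]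
  refine ⟨h1, h2, ?_⟩
  have hKne : (K : ℝ) ≠ 0 := Nat.cast_ne_zero.2 hK.ne'
  have hexp : ∑ k, (‖Y k‖ ^ 2 - R₂) ^ 2
      = (∑ k, ‖Y k‖ ^ 4) - 2 * R₂ * (∑ k, ‖Y k‖ ^ 2) + K * R₂ ^ 2 := by
    have : ∀ k : Fin K, (‖Y k‖ ^ 2 - R₂) ^ 2
        = ‖Y k‖ ^ 4 - 2 * R₂ * ‖Y k‖ ^ 2 + R₂ ^ 2 := fun k => by ring
    rw [Finset.sum_congr rfl fun k _ => this k, Finset.sum_add_distrib,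
      Finset.sum_sub_distrib, ← Finset.mul_sum, Finset.sum_const, Finset.card_univ,
      Fintype.card_fin, nsmul_eq_mul]
  rw [hexp, dotProduct_comm b v, ← h1, ← h2]
  field_simp
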